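/- Let A be a weakly central quantization over a field k of characteristic p > 2: an ℏ-torsion-free k[[ℏ]]-algebra such that for every a ∈ A there is a^{[p]} ∈ A with a^p − ℏ^{p−1} a^{[p]} ∈ Z(A). Suppose f, g ∈ A satisfy [f, g] = ℏ and f^{[p]} commutes with both f and g. Then (f + g^{p−1} f^{[p]})^p − (g^{p−1} f^{[p]})^p ∈ Z(A). -/

import Mathlib

open Polynomial Finset

section EE
variable (p : ℕ) [Fact p.Prime]

noncomputable def Epoly (m : ℕ) : Polynomial (ZMod p) :=
  ∏ i ∈ Finset.range m, (1 - Polynomial.C (i : ZMod p) * Polynomial.X)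

noncomputable def Ec (m j : ℕ) : ZMod p := (Epoly p m).coeff j

lemma Ec_zero (m : ℕ) : Ec p m 0 = 1 := by
  unfold Ec Epoly
  rw [coeff_zero_eq_eval_zero, eval_prod]
  simp

lemma Ec_rec (m j : ℕ) :
    Ec p (m+1) (j+1) = Ec p m (j+1) - (m : ZMod p) * Ec p m j := by
  unfold Ec Epoly
  rw [Finset.prod_range_succ, mul_sub, mul_one, coeff_sub, mul_comm (C (m:ZMod p)) X,
    ← mul_assoc, coeff_mul_C, coeff_mul_X]
  ring

lemma Epoly_natDegree (m : ℕ) : (Epoly p (m+1)).natDegree ≤ m := by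
  unfold Epoly
  rw [Finset.prod_range_succ']
  simp only [Nat.cast_zero, map_zero, zero_mul, sub_zero, mul_one]
  refine le_trans (natDegree_prod_le _ _) ?_
  refine le_trans (Finset.sum_le_card_nsmul _ _ 1 ?_) (by simp)
  intro i _
  refine le_trans (natDegree_sub_le _ _) ?_
  refine max_le (by simp) (le_trans natDegree_mul_le ?_)
  rw [natDegree_C, natDegree_X]

lemma Ec_high (m j : ℕ) (hm : 1 ≤ m) (hj : m ≤ j) : Ec p m j = 0 := by
  match m, hm with
  | (n+1), _ =>
    have := Epoly_natDegree p n
    exact coeff_eq_zero_of_natDegree_lt (by omega)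

lemma Epoly_eq : Epoly p p = 1 - Polynomial.X ^ (p - 1) := by
  have hp := (Fact.out : p.Prime)
  have h2 := hp.two_le
  have hQ : Epoly p p - (1 - Polynomial.X ^ (p - 1)) = 0 := by
    apply Polynomial.eq_zero_of_natDegree_lt_card_of_eval_eq_zero _
      (Function.injective_id (α := ZMod p))
    · intro a
      simp only [id]
      rw [eval_sub, eval_sub, eval_one, eval_pow, eval_X]
      rcases eq_or_ne a 0 with rfl | ha
      · rw [zero_pow (by omega : p - 1 ≠ 0), sub_zero]
        unfold Epoly
        rw [eval_prod, Finset.prod_eq_one (fun i _ => by simp), sub_self]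
      · have h1 : eval a (Epoly p p) = 0 := by
          unfold Epoly
          rw [eval_prod]
          refine Finset.prod_eq_zero (i := (a⁻¹).val) (Finset.mem_range.mpr (ZMod.val_lt _)) ?_
          rw [eval_sub, eval_one, eval_mul, eval_C, eval_X, ZMod.natCast_val, ZMod.cast_id,
            inv_mul_cancel₀ ha, sub_self]
        rw [h1, ZMod.pow_card_sub_one_eq_one ha, sub_self, sub_zero]
    · have hd1 : (Epoly p p).natDegree ≤ p - 1 := by
        have h := Epoly_natDegree p (p - 1)
        rw [(by omega : p - 1 + 1 = p)] at h
        exact h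
      have hd2 : (1 - Polynomial.X ^ (p - 1) : Polynomial (ZMod p)).natDegree ≤ p - 1 := by
        refine le_trans (natDegree_sub_le _ _) (max_le (by simp) (by simp))
      have hc : Fintype.card (ZMod p) = p := ZMod.card p
      have := natDegree_sub_le (Epoly p p) (1 - Polynomial.X ^ (p - 1))
      rw [hc]
      omega
  exact sub_eq_zero.mp hQ

lemma Ec_p_mid (j : ℕ) (h0 : j ≠ 0) (h1 : j ≠ p - 1) : Ec p p j = 0 := by
  unfold Ec
  rw [Epoly_eq, coeff_sub, coeff_one, coeff_X_pow]
  simp [h0, h1]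

lemma Ec_p_last : Ec p p (p-1) = -1 := by
  have hp2 := (Fact.out : p.Prime).two_le
  unfold Ec
  rw [Epoly_eq, coeff_sub, coeff_one, coeff_X_pow]
  rw [if_neg (by omega), if_pos rfl, zero_sub]
end EE

section key
variable (p : ℕ) [Fact p.Prime] {A : Type*} [Ring A] (φ : ZMod p →+* A) (ℏ f g fp : A)

/-- monomial -/
noncomputable def Sm (m j : ℕ) : A := ℏ ^ j * (fp ^ (m - j) * g ^ ((m - j) * p - m))

/-- the sequence u -/
noncomputable def uu : ℕ → A
  | 0 => 1
  | (m+1) => ∑ j ∈ Finset.range (m+1), φ (Ec p (m+1) j) * Sm p ℏ g fp (m+1) j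

variable (hφ : ∀ (x : ZMod p) (a : A), Commute (φ x) a) (hℏ : ∀ a : A, Commute ℏ a)
  (hfg : f * g - g * f = ℏ) (hcf : Commute fp f) (hcg : Commute fp g)

include hℏ hfg in
lemma L1 : ∀ m : ℕ, f * g ^ m = g ^ m * f + (m : A) * (ℏ * g ^ (m - 1)) := by
  intro m
  induction m with
  | zero => simp
  | succ n ih =>
    have hfg' : f * g = g * f + ℏ := by rw [← hfg]; noncomm_ring
    rcases Nat.eq_zero_or_pos n with rfl | hn
    · simpa using hfg'
    · calc f * g ^ (n+1) = (f * g ^ n) * g := by rw [pow_succ, mul_assoc]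
        _ = (g ^ n * f + (n : A) * (ℏ * g ^ (n-1))) * g := by rw [ih]
        _ = g ^ n * (f * g) + (n : A) * (ℏ * (g ^ (n-1) * g)) := by
              noncomm_ring
        _ = g ^ n * (g * f + ℏ) + (n : A) * (ℏ * g ^ n) := by
              rw [hfg', ← pow_succ, Nat.sub_add_cancel hn]
        _ = g ^ (n+1) * f + ((n:A) + 1) * (ℏ * g ^ n) := by
              rw [pow_succ, mul_add, ← (hℏ (g ^ n)).eq]; noncomm_ring
        _ = g ^ (n+1) * f + ((n+1 : ℕ) : A) * (ℏ * g ^ ((n+1) - 1)) := by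
              push_cast; simp
end key

section key2
variable (p : ℕ) [Fact p.Prime] {A : Type*} [Ring A] (φ : ZMod p →+* A) (ℏ f g fp : A)
variable (hφ : ∀ (x : ZMod p) (a : A), Commute (φ x) a) (hℏ : ∀ a : A, Commute ℏ a)
  (hfg : f * g - g * f = ℏ) (hcf : Commute fp f) (hcg : Commute fp g)

lemma mv {A : Type*} [Ring A] (z : A) (hz : ∀ x : A, Commute z x) (a b : A) :
    a * (z * b) = z * (a * b) := by
  rw [← mul_assoc, ← (hz a).eq, mul_assoc]

include hφ hℏ hfg hcf in
lemma hfS (m j : ℕ) (hj : j < m) (hm : m < p) :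
    f * Sm p ℏ g fp m j = Sm p ℏ g fp m j * f
      + φ (-(m : ZMod p)) * Sm p ℏ g fp (m+1) (j+1) := by
  have hp2 := (Fact.out : p.Prime).two_le
  have hq : p ≤ (m - j) * p := Nat.le_mul_of_pos_left p (by omega)
  unfold Sm
  have h1 : (m+1) - (j+1) = m - j := by omega
  rw [h1]
  set q := (m - j) * p with hqdef
  have hme : m ≤ q := by omega
  have h2 : q - (m+1) = (q - m) - 1 := by omega
  rw [h2]
  set e := q - m with he
  have he1 : 1 ≤ e := by omega
  have hcast : ((e : ℕ) : A) = φ (-(m : ZMod p)) := by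
    rw [← map_natCast φ e]
    congr 1
    rw [he, Nat.cast_sub hme, hqdef, Nat.cast_mul, ZMod.natCast_self, mul_zero, zero_sub]
  set k := m - j with hk
  -- LHS rearrange
  rw [← mul_assoc, ((hℏ f).pow_left j).symm.eq, mul_assoc, ← mul_assoc f,
    ← (hcf.pow_left k).eq, mul_assoc (fp ^ k), L1 ℏ f g hℏ hfg e, hcast]
  -- now move central elements
  rw [mul_add, mul_add]
  congr 1
  · simp only [mul_assoc]
  · rw [mv (φ (-(m : ZMod p))) (hφ _), mv ℏ hℏ, mv (φ (-(m : ZMod p))) (hφ _)]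
    congr 1
    rw [← mul_assoc, ← pow_succ]

include hℏ hcg in
lemma hcS (m j : ℕ) (hj : j < m) (hm : m < p) :
    (g ^ (p-1) * fp) * Sm p ℏ g fp m j = Sm p ℏ g fp (m+1) j := by
  have hp2 := (Fact.out : p.Prime).two_le
  have hq : p ≤ (m - j) * p := Nat.le_mul_of_pos_left p (by omega)
  unfold Sm
  have h1 : (m+1) - j = (m - j) + 1 := by omega
  rw [h1]
  set q := (m - j) * p with hqdef
  set k := m - j with hk
  have h2 : (k+1) * p - (m+1) = (p - 1) + (q - m) := by
    rw [add_mul, one_mul]; omega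
  rw [h2]
  rw [mv (ℏ ^ j) (fun x => (hℏ x).pow_left j)]
  congr 1
  rw [mul_assoc (g ^ (p-1)), ← mul_assoc fp (fp ^ k), ← pow_succ' fp k,
    ← mul_assoc, ← ((hcg.pow_right (p-1)).pow_left (k+1)).eq, mul_assoc, ← pow_add]

lemma uu_succ (m : ℕ) : uu p φ ℏ g fp (m+1)
    = ∑ j ∈ Finset.range (m+1), φ (Ec p (m+1) j) * Sm p ℏ g fp (m+1) j := rfl

include hφ hℏ hfg hcf hcg in
lemma L2 (m : ℕ) (hm : m < p) :
    (f + g ^ (p-1) * fp) * uu p φ ℏ g fp m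
      = uu p φ ℏ g fp m * f + uu p φ ℏ g fp (m+1) := by
  have hp2 := (Fact.out : p.Prime).two_le
  rcases Nat.eq_zero_or_pos m with rfl | hm1
  · show (f + g ^ (p-1) * fp) * 1 = 1 * f + _
    rw [uu_succ, Finset.sum_range_one, Ec_zero, map_one, one_mul, mul_one, one_mul]
    show f + g ^ (p-1) * fp = f + Sm p ℏ g fp 1 0
    unfold Sm
    simp only [Nat.sub_zero, one_mul, pow_zero, pow_one]
    rw [(hcg.pow_right (p-1)).eq]
  · obtain ⟨n, rfl⟩ : ∃ n, m = n + 1 := ⟨m - 1, by omega⟩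
    set m := n + 1 with hmdef
    set c := g ^ (p-1) * fp with hc
    rw [uu_succ, Finset.mul_sum]
    have step : ∀ j ∈ Finset.range m,
        (f + c) * (φ (Ec p m j) * Sm p ℏ g fp m j)
        = φ (Ec p m j) * Sm p ℏ g fp m j * f
          + (φ (Ec p m j * -(m : ZMod p)) * Sm p ℏ g fp (m+1) (j+1)
             + φ (Ec p m j) * Sm p ℏ g fp (m+1) j) := by
      intro j hj
      rw [Finset.mem_range] at hj
      rw [add_mul, mv (φ (Ec p m j)) (hφ _) f, mv (φ (Ec p m j)) (hφ _) c,
        hfS p φ ℏ f g fp hφ hℏ hfg hcf m j hj hm, hc,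
        hcS p ℏ g fp hℏ hcg m j hj hm, mul_add, map_mul, mul_assoc,
        ← mul_assoc (φ (Ec p m j)) (φ (-(m:ZMod p))), ← map_mul]
      noncomm_ring
    rw [Finset.sum_congr rfl step, Finset.sum_add_distrib, ← Finset.sum_mul]
    congr 1
    -- remaining: sums combine to uu (m+1)
    have hext : ∑ j ∈ Finset.range m, φ (Ec p m j) * Sm p ℏ g fp (m+1) j
        = ∑ j ∈ Finset.range (m+1), φ (Ec p m j) * Sm p ℏ g fp (m+1) j := by
      conv_rhs => rw [Finset.sum_range_succ]
      rw [Ec_high p m m hm1 le_rfl, map_zero, zero_mul, add_zero]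
    have hL : ∑ j ∈ Finset.range m, φ (Ec p m j) * Sm p ℏ g fp (m+1) j
        = (∑ j ∈ Finset.range m, φ (Ec p m (j+1)) * Sm p ℏ g fp (m+1) (j+1))
          + φ (Ec p m 0) * Sm p ℏ g fp (m+1) 0 := by
      rw [hext, Finset.sum_range_succ']
    rw [Finset.sum_add_distrib, hL, uu_succ p φ ℏ g fp m]
    conv_rhs => rw [Finset.sum_range_succ']
    rw [← add_assoc, ← Finset.sum_add_distrib]
    congr 1
    · refine Finset.sum_congr rfl (fun j hj => ?_)
      rw [← add_mul, ← map_add]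
      conv_rhs => rw [Ec_rec]
      congr 2
      ring
    · rw [Ec_zero, Ec_zero]

include hφ hℏ hfg hcf hcg in
lemma L3 (n : ℕ) (hn : n ≤ p) :
    (f + g ^ (p-1) * fp) ^ n
      = ∑ i ∈ Finset.range (n+1),
          n.choose i • (uu p φ ℏ g fp (n - i) * f ^ i) := by
  set c := g ^ (p-1) * fp with hc
  induction n with
  | zero => simp [uu]
  | succ n ih =>
    have hnp : n < p := hn
    rw [pow_succ', ih (by omega), Finset.mul_sum]
    have step : ∀ i ∈ Finset.range (n+1),
        (f + c) * (n.choose i • (uu p φ ℏ g fp (n-i) * f^i))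
        = n.choose i • (uu p φ ℏ g fp (n-i) * f^(i+1))
          + n.choose i • (uu p φ ℏ g fp (n-i+1) * f^i) := by
      intro i hi
      rw [mul_smul_comm, ← mul_assoc,
        L2 p φ ℏ f g fp hφ hℏ hfg hcf hcg (n-i) (by omega), add_mul, mul_assoc,
        ← pow_succ', smul_add]
    rw [Finset.sum_congr rfl step, Finset.sum_add_distrib]
    have e1 : ∀ i ∈ Finset.range n,
        n.choose i • (uu p φ ℏ g fp (n-i) * f^(i+1))
          + n.choose (i+1) • (uu p φ ℏ g fp (n-(i+1)+1) * f^(i+1))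
        = (n+1).choose (i+1) • (uu p φ ℏ g fp ((n+1)-(i+1)) * f^(i+1)) := by
      intro i hi
      rw [Finset.mem_range] at hi
      rw [(by omega : n-(i+1)+1 = n-i), (by omega : (n+1)-(i+1) = n-i),
        Nat.choose_succ_succ, add_nsmul]
    have key : (∑ i ∈ Finset.range n, n.choose i • (uu p φ ℏ g fp (n-i) * f^(i+1)))
        + ∑ i ∈ Finset.range n, n.choose (i+1) • (uu p φ ℏ g fp (n-(i+1)+1) * f^(i+1))
        = ∑ i ∈ Finset.range n, (n+1).choose (i+1) • (uu p φ ℏ g fp ((n+1)-(i+1)) * f^(i+1)) := by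
      rw [← Finset.sum_add_distrib]
      exact Finset.sum_congr rfl e1
    conv_rhs => rw [Finset.sum_range_succ', Finset.sum_range_succ]
    conv_lhs => rw [Finset.sum_range_succ]
    conv_lhs => rw [Finset.sum_range_succ']
    have hPn : n.choose n • (uu p φ ℏ g fp (n-n) * f^(n+1))
        = (n+1).choose (n+1) • (uu p φ ℏ g fp ((n+1)-(n+1)) * f^(n+1)) := by
      simp [Nat.choose_self]
    have hQ0 : n.choose 0 • (uu p φ ℏ g fp (n-0+1) * f^0)
        = (n+1).choose 0 • (uu p φ ℏ g fp (n+1-0) * f^0) := by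
      simp
    calc (∑ i ∈ Finset.range n, n.choose i • (uu p φ ℏ g fp (n-i) * f^(i+1))
            + n.choose n • (uu p φ ℏ g fp (n-n) * f^(n+1)))
          + (∑ i ∈ Finset.range n, n.choose (i+1) • (uu p φ ℏ g fp (n-(i+1)+1) * f^(i+1))
            + n.choose 0 • (uu p φ ℏ g fp (n-0+1) * f^0))
        = ((∑ i ∈ Finset.range n, n.choose i • (uu p φ ℏ g fp (n-i) * f^(i+1)))
            + ∑ i ∈ Finset.range n, n.choose (i+1) • (uu p φ ℏ g fp (n-(i+1)+1) * f^(i+1)))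
          + (n.choose n • (uu p φ ℏ g fp (n-n) * f^(n+1))
            + n.choose 0 • (uu p φ ℏ g fp (n-0+1) * f^0)) := by abel
      _ = (∑ i ∈ Finset.range n, (n+1).choose (i+1) • (uu p φ ℏ g fp ((n+1)-(i+1)) * f^(i+1)))
          + ((n+1).choose (n+1) • (uu p φ ℏ g fp ((n+1)-(n+1)) * f^(n+1))
            + (n+1).choose 0 • (uu p φ ℏ g fp (n+1-0) * f^0)) := by
            rw [key, hPn, hQ0]
      _ = _ := by abel

include hφ hℏ hfg hcf hcg in
theorem keyIdentity :
    (f + g ^ (p-1) * fp) ^ p - (g ^ (p-1) * fp) ^ p = f ^ p - ℏ ^ (p-1) * fp := by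
  have hp := (Fact.out : p.Prime)
  have hp2 := hp.two_le
  have charA : ((p:ℕ) : A) = 0 := by
    rw [← map_natCast φ p, ZMod.natCast_self, map_zero]
  rw [L3 p φ ℏ f g fp hφ hℏ hfg hcf hcg p le_rfl]
  have hsub : ({0, p} : Finset ℕ) ⊆ Finset.range (p+1) := by
    intro i hi
    simp only [Finset.mem_insert, Finset.mem_singleton] at hi
    rcases hi with rfl | rfl <;> simp [Finset.mem_range] <;> omega
  have hzero : ∀ i ∈ Finset.range (p+1), i ∉ ({0, p} : Finset ℕ) →
      p.choose i • (uu p φ ℏ g fp (p-i) * f^i) = 0 := by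
    intro i hi hni
    rw [Finset.mem_range] at hi
    simp only [Finset.mem_insert, Finset.mem_singleton] at hni
    push_neg at hni
    obtain ⟨t, ht⟩ := Nat.Prime.dvd_choose_self (k := i) hp (by omega) (by omega)
    rw [ht, mul_comm p t, mul_nsmul, nsmul_eq_mul, charA, zero_mul]
  rw [← Finset.sum_subset hsub hzero, Finset.sum_insert (by simp; omega),
    Finset.sum_singleton]
  simp only [Nat.choose_self, Nat.choose_zero_right, Nat.sub_self, Nat.sub_zero,
    one_smul, pow_zero, mul_one]
  have hup : uu p φ ℏ g fp p = (g ^ (p-1) * fp) ^ p - ℏ^(p-1) * fp := by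
    have h1 : p - 1 + 1 = p := by omega
    have husucc := uu_succ p φ ℏ g fp (p-1)
    rw [h1] at husucc
    rw [husucc]
    have hsub2 : ({0, p-1} : Finset ℕ) ⊆ Finset.range p := by
      intro i hi
      simp only [Finset.mem_insert, Finset.mem_singleton] at hi
      rcases hi with rfl | rfl <;> rw [Finset.mem_range] <;> omega
    have hzero2 : ∀ j ∈ Finset.range p, j ∉ ({0, p-1} : Finset ℕ) →
        φ (Ec p p j) * Sm p ℏ g fp p j = 0 := by
      intro j hj hnj
      simp only [Finset.mem_insert, Finset.mem_singleton] at hnj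
      push_neg at hnj
      rw [Ec_p_mid p j hnj.1 hnj.2, map_zero, zero_mul]
    rw [← Finset.sum_subset hsub2 hzero2,
      Finset.sum_insert (by simp only [Finset.mem_singleton]; omega),
      Finset.sum_singleton, Ec_zero, map_one, one_mul, Ec_p_last, map_neg, map_one,
      neg_one_mul]
    unfold Sm
    rw [pow_zero, one_mul, Nat.sub_zero, (by omega : p - (p-1) = 1), pow_one,
      (by omega : 1 * p - p = 0), pow_zero, mul_one]
    rw [(hcg.symm.pow_left (p-1)).mul_pow, ← pow_mul,
      ← ((hcg.pow_pow p ((p-1)*p)).eq), (by rw [Nat.sub_mul]; omega : (p-1)*p = p*p - p)]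
    rw [← sub_eq_add_neg]
  rw [hup]
  have h00 : uu p φ ℏ g fp 0 = 1 := rfl
  rw [h00, one_mul]
  abel
end key2

/-- Let `A` be a weakly central quantization over a field `k` of characteristic
`p > 2`: an `ℏ`-torsion-free `k[[ℏ]]`-algebra such that every `a ∈ A` admits
`a^{[p]}` with `a^p − ℏ^{p−1} a^{[p]} ∈ Z(A)`.  If `f, g ∈ A` satisfy `[f,g] = ℏ`
and `f^{[p]}` commutes with `f` and `g`, then
`(f + g^{p−1} f^{[p]})^p − (g^{p−1} f^{[p]})^p ∈ Z(A)`. -/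
theorem weakly_central_identity (k : Type*) [Field k] (p : ℕ) [Fact p.Prime]
    [CharP k p] (hp2 : 2 < p)
    (A : Type*) [Ring A] [Algebra (PowerSeries k) A]
    (ℏ : A) (hℏ : ℏ = algebraMap (PowerSeries k) A PowerSeries.X)
    (htf : ∀ a : A, ℏ * a = 0 → a = 0)
    (hwc : ∀ a : A, ∃ b : A, a ^ p - ℏ ^ (p - 1) * b ∈ Set.center A)
    (f g fp : A) (hfg : f * g - g * f = ℏ)
    (hfp : f ^ p - ℏ ^ (p - 1) * fp ∈ Set.center A)
    (hcf : Commute fp f) (hcg : Commute fp g) :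
    (f + g ^ (p - 1) * fp) ^ p - (g ^ (p - 1) * fp) ^ p ∈ Set.center A := by
  set φ : ZMod p →+* A :=
    ((algebraMap (PowerSeries k) A).comp
      ((PowerSeries.C (R := k)).comp (ZMod.castHom (dvd_refl p) k))) with hφdef
  have hφ : ∀ (x : ZMod p) (a : A), Commute (φ x) a := by
    intro x a
    show φ x * a = a * φ x
    rw [hφdef]
    exact Algebra.commutes _ a
  have hℏc : ∀ a : A, Commute ℏ a := by
    intro a
    show ℏ * a = a * ℏ
    rw [hℏ]
    exact Algebra.commutes _ a
  have hk := keyIdentity p φ ℏ f g fp hφ hℏc hfg hcf hcg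
  rw [hk]
  exact hfp
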